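/- Let C = T_1 + ... + T_k be a ΣΠΣ(k,d) identity over a field F, and let K be a linear subspace of the space of linear forms such that for every i ∈ {1,...,k} there is a K-matching between L(T_1) and L(T_i). Then the multiplication terms M(L_K(T_i)) (the products of the forms of L(T_i) lying in K), for i ∈ {1,...,k}, all have the same degree d', and there exist α_1,...,α_k ∈ F* such that Σ_{i=1}^k α_i·M(L_K(T_i)) = 0. -/

import Mathlib

open MvPolynomial

noncomputable section

namespace SGPaper

variable {F : Type*}

/-- The linear form with coefficient vector `v`. -/
def toForm [Field F] {n : ℕ} (v : Fin n → F) : MvPolynomial (Fin n) F :=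
  ∑ i, MvPolynomial.C (v i) * MvPolynomial.X i

/-- A multiplication term `c · ∏_{ℓ ∈ S} ℓ`. -/
def mTerm [Field F] {n : ℕ} (c : F) (S : Multiset (Fin n → F)) : MvPolynomial (Fin n) F :=
  MvPolynomial.C c * (S.map toForm).prod

/-- The `F`-linear span of the forms in the multiset `S` (radical span). -/
def radsp (F : Type*) [Field F] {n : ℕ} (S : Multiset (Fin n → F)) :
    Submodule F (Fin n → F) :=
  Submodule.span F {v | v ∈ S}

/-- `b ∈ F^* · a + K`, i.e. `b` is similar to `a` modulo the subspace `K`. -/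
def simRel [Field F] {n : ℕ} (K : Submodule F (Fin n → F)) (a b : Fin n → F) : Prop :=
  ∃ c : F, c ≠ 0 ∧ b - c • a ∈ K

/-- A `K`-matching between two multisets of linear forms: a bijection `π` with
`π(ℓ) ∈ F^*·ℓ + K` for all `ℓ`. -/
def KMatching [Field F] {n : ℕ} (K : Submodule F (Fin n → F))
    (A B : Multiset (Fin n → F)) : Prop :=
  Multiset.Rel (simRel K) A B

/-- No element of `S` is a scalar multiple of another element of `S`. -/
def MultipleFree [Field F] {n : ℕ} (S : Finset (Fin n → F)) : Prop :=
  ∀ v ∈ S, ∀ w ∈ S, ∀ c : F, w = c • v → w = v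

/-- `S` is `SG_k`-closed: it consists of nonzero vectors, is multiple-free, and the span of
any `k` linearly independent vectors of `S` contains at least `k+1` vectors of `S`. -/
def SGClosed (F : Type*) [Field F] (k : ℕ) {n : ℕ} (S : Finset (Fin n → F)) : Prop :=
  (∀ v ∈ S, v ≠ 0) ∧ MultipleFree S ∧
    ∀ V : Finset (Fin n → F), V ⊆ S → V.card = k →
      LinearIndependent F (fun v : (V : Set (Fin n → F)) => (v : Fin n → F)) →
      k + 1 ≤ ((S : Set (Fin n → F)) ∩
        (Submodule.span F (V : Set (Fin n → F)) : Set (Fin n → F))).ncard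

/-- The rank of a finite set of vectors. -/
def sgRank (F : Type*) [Field F] {n : ℕ} (S : Finset (Fin n → F)) : ℕ :=
  Module.finrank F (Submodule.span F (S : Set (Fin n → F)))

/-- `SG_k(F, m)`: the largest possible rank of an `SG_k`-closed set of at most `m`
vectors in `F^n`, over all `n`. -/
def SGBound (F : Type*) [Field F] (k m : ℕ) : ℕ :=
  sSup {r | ∃ n : ℕ, ∃ S : Finset (Fin n → F), SGClosed F k S ∧ S.card ≤ m ∧ r = sgRank F S}

/-- The polynomial computed by a multiplication gate of a depth-3 circuit. -/
def circTerm [Field F] {n d : ℕ} (c : F) (v : Fin d → Fin n → F) : MvPolynomial (Fin n) F :=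
  MvPolynomial.C c * ∏ j, toForm (v j)

/-- The multiset `L(T_i)` of linear forms of the `i`-th gate. -/
def Lmul {F : Type*} {n k d : ℕ} (ℓ : Fin k → Fin d → Fin n → F) (i : Fin k) :
    Multiset (Fin n → F) :=
  Multiset.map (ℓ i) Finset.univ.val

/-- The circuit is simple: no nonzero linear form divides all the gates. -/
def IsSimple [Field F] {n k d : ℕ} (c : Fin k → F) (ℓ : Fin k → Fin d → Fin n → F) : Prop :=
  ¬ ∃ v : Fin n → F, v ≠ 0 ∧ ∀ i, toForm v ∣ circTerm (c i) (ℓ i)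

/-- The circuit is minimal: no nonempty proper subset of the gates sums to zero. -/
def IsMinimal [Field F] {n k d : ℕ} (c : Fin k → F) (ℓ : Fin k → Fin d → Fin n → F) : Prop :=
  ∀ S : Finset (Fin k), S.Nonempty → S ≠ Finset.univ →
    ∑ i ∈ S, circTerm (c i) (ℓ i) ≠ 0

/-- The rank of a depth-3 circuit: the rank of all the linear forms occurring in it. -/
def circRank (F : Type*) [Field F] {n k d : ℕ} (ℓ : Fin k → Fin d → Fin n → F) : ℕ :=
  Module.finrank F (Submodule.span F (Set.range fun p : Fin k × Fin d => ℓ p.1 p.2))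

open Classical in
/-- `M(L_K(T_i))`: the product of the forms of the gate lying in the subspace `K`. -/
def nucTerm [Field F] {n d : ℕ} (K : Submodule F (Fin n → F)) (v : Fin d → Fin n → F) :
    MvPolynomial (Fin n) F :=
  ∏ j ∈ Finset.univ.filter (fun j => v j ∈ K), toForm (v j)

/-- A partition `P` splits `S` if some class meets `S` but does not contain it. -/
def Splits {U : Type*} [DecidableEq U] {s : Finset U} (P : Finpartition s)
    (S : Finset U) : Prop :=
  ∃ X ∈ P.parts, (X ∩ S).Nonempty ∧ ¬ S ⊆ X



section NucleusAux

variable [Field F] {n : ℕ}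

theorem toForm_add (v w : Fin n → F) : toForm (v + w) = toForm v + toForm w := by
  simp [toForm, add_mul, Finset.sum_add_distrib]

theorem toForm_smul (a : F) (v : Fin n → F) : toForm (a • v) = MvPolynomial.C a * toForm v := by
  simp [toForm, Finset.mul_sum, mul_assoc]

/-- `toForm` as a linear map. -/
def toFormL : (Fin n → F) →ₗ[F] MvPolynomial (Fin n) F where
  toFun := toForm
  map_add' := toForm_add
  map_smul' a v := by simp [toForm_smul, smul_eq_C_mul]

theorem toForm_eq_zero_iff {v : Fin n → F} : toForm v = 0 ↔ v = 0 := by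
  constructor
  · intro h
    funext j
    have := congrArg (MvPolynomial.eval (Pi.single j 1)) h
    simpa [toForm, Pi.single_apply, mul_ite, Finset.sum_ite_eq'] using this
  · rintro rfl; simp [toForm]

theorem rel_card {α β : Type*} {r : α → β → Prop} {s : Multiset α} {t : Multiset β}
    (h : Multiset.Rel r s t) : Multiset.card s = Multiset.card t := by
  induction h with
  | zero => rfl
  | cons hab h ih => simp [ih]

theorem rel_filter {α : Type*} {r : α → α → Prop} {p : α → Prop} [DecidablePred p]
    {s t : Multiset α} (h : Multiset.Rel r s t) (hp : ∀ a b, r a b → (p a ↔ p b)) :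
    Multiset.Rel r (s.filter p) (t.filter p) := by
  induction h with
  | zero => simp
  | @cons a b s t hab h ih =>
    by_cases hpa : p a
    · rw [Multiset.filter_cons_of_pos _ hpa,
        Multiset.filter_cons_of_pos _ ((hp a b hab).1 hpa)]
      exact Multiset.Rel.cons hab ih
    · rw [Multiset.filter_cons_of_neg _ hpa,
        Multiset.filter_cons_of_neg _ (fun hpb => hpa ((hp a b hab).2 hpb))]
      exact ih

theorem simRel_mem_iff {K : Submodule F (Fin n → F)} {a b : Fin n → F}
    (h : simRel K a b) : (a ∈ K ↔ b ∈ K) := by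
  obtain ⟨e, he, hkmem⟩ := h
  constructor
  · intro ha
    have hb : b = (b - e • a) + e • a := by ring_nf
    rw [hb]; exact K.add_mem hkmem (K.smul_mem e ha)
  · intro hb
    have h2 : e • a ∈ K := by
      have h3 : e • a = b - (b - e • a) := by ring_nf
      rw [h3]; exact K.sub_mem hb hkmem
    have h4 := K.smul_mem e⁻¹ h2
    rwa [smul_smul, inv_mul_cancel₀ he, one_smul] at h4

/-- Products of `toForm ∘ π` over `simRel K`-related multisets differ by a nonzero scalar,
for `π` linear killing `K`. -/
theorem rel_prod {K : Submodule F (Fin n → F)} (π : (Fin n → F) →ₗ[F] (Fin n → F))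
    (hπ : ∀ v ∈ K, π v = 0) {s t : Multiset (Fin n → F)}
    (h : Multiset.Rel (simRel K) s t) :
    ∃ γ : F, γ ≠ 0 ∧ (t.map fun v => toForm (π v)).prod
      = MvPolynomial.C γ * (s.map fun v => toForm (π v)).prod := by
  induction h with
  | zero => exact ⟨1, one_ne_zero, by simp⟩
  | @cons a b s t hab h ih =>
    obtain ⟨γ, hγ, hprod⟩ := ih
    obtain ⟨e, he, hkmem⟩ := hab
    have hb : π b = e • π a := by
      have h0 : π (b - e • a) = 0 := hπ _ hkmem
      rw [map_sub, map_smul, sub_eq_zero] at h0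
      exact h0
    refine ⟨e * γ, mul_ne_zero he hγ, ?_⟩
    simp only [Multiset.map_cons, Multiset.prod_cons, hprod, hb, toForm_smul, map_mul]
    ring

/-- Top coefficient of a product of linear (in `Polynomial.X`) polynomials. -/
theorem coeff_prod_linear {R : Type*} [CommRing R] {ι : Type*} (s : Finset ι) (a b : ι → R) :
    (∏ j ∈ s, (Polynomial.C (a j) + Polynomial.X * Polynomial.C (b j))).natDegree ≤ s.card ∧
    (∏ j ∈ s, (Polynomial.C (a j) + Polynomial.X * Polynomial.C (b j))).coeff s.card
      = ∏ j ∈ s, b j := by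
  classical
  induction s using Finset.induction_on with
  | empty => simp
  | @insert i s hi ih =>
    obtain ⟨hdeg, hcoeff⟩ := ih
    rw [Finset.prod_insert hi, Finset.prod_insert hi, Finset.card_insert_of_notMem hi]
    constructor
    · refine le_trans (Polynomial.natDegree_mul_le) ?_
      have h1 : (Polynomial.C (a i) + Polynomial.X * Polynomial.C (b i)).natDegree ≤ 1 := by
        refine le_trans (Polynomial.natDegree_add_le _ _) ?_
        exact max_le (by simp)
          (le_trans Polynomial.natDegree_mul_le (by simpa using Polynomial.natDegree_X_le))
      omega
    · rw [add_mul, mul_assoc]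
      rw [Polynomial.coeff_add, Polynomial.coeff_C_mul, Polynomial.coeff_X_mul,
        Polynomial.coeff_C_mul,
        Polynomial.coeff_eq_zero_of_natDegree_lt (lt_of_le_of_lt hdeg (Nat.lt_succ_self _)),
        hcoeff]
      ring

theorem Psi_toForm (π : (Fin n → F) →ₗ[F] (Fin n → F)) (v : Fin n → F) :
    (eval₂Hom (Polynomial.C.comp MvPolynomial.C)
      (fun m => Polynomial.C (MvPolynomial.X m)
        + Polynomial.X * Polynomial.C (toForm (π (Pi.single m 1)))))
      (toForm v)
    = Polynomial.C (toForm v) + Polynomial.X * Polynomial.C (toForm (π v)) := by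
  classical
  have hsingle : ∀ m : Fin n, (fun j => if m = j then (1:F) else 0) = Pi.single m 1 := by
    intro m; funext j; simp [Pi.single_apply, eq_comm]
  have key : ∑ m, MvPolynomial.C (v m) * toForm (π (Pi.single m 1)) = toForm (π v) := by
    have h2 := LinearMap.pi_apply_eq_sum_univ (toFormL.comp π) v
    simp only [hsingle] at h2
    calc ∑ m, MvPolynomial.C (v m) * toForm (π (Pi.single m 1))
        = ∑ m, v m • (toFormL.comp π) (Pi.single m 1) := by
          refine Finset.sum_congr rfl fun m _ => ?_
          rw [smul_eq_C_mul]; rfl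
      _ = toForm (π v) := by rw [← h2]; rfl
  conv_lhs => rw [toForm, map_sum]
  simp only [map_mul, eval₂Hom_C, RingHom.comp_apply, eval₂Hom_X', mul_add,
    Finset.sum_add_distrib]
  congr 1
  · simp only [← Polynomial.C_mul, ← map_sum]
    rfl
  · rw [Finset.sum_congr rfl (fun m _ => mul_left_comm
      (Polynomial.C (MvPolynomial.C (v m))) Polynomial.X _), ← Finset.mul_sum]
    congr 1
    simp only [← Polynomial.C_mul, ← map_sum, key]

end NucleusAux

open scoped Classical in
/-- **Nucleus identity.** If `C = T_1 + ... + T_k` is a `ΣΠΣ(k,d)` identity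
and `K` is a subspace `K`-matching `L(T_1)` to every `L(T_i)`, then the terms
`M(L_K(T_i))` all have the same degree `d'` and satisfy an identity
`Σ_i α_i·M(L_K(T_i)) = 0` with all `α_i ∈ F^*`. -/
theorem nucleus_identity {F : Type*} [Field F] {n k d : ℕ} (hk : 0 < k)
    (c : Fin k → F) (ℓ : Fin k → Fin d → Fin n → F)
    (hc : ∀ i, c i ≠ 0) (hℓ : ∀ i j, ℓ i j ≠ 0)
    (hzero : ∑ i, circTerm (c i) (ℓ i) = 0)
    (K : Submodule F (Fin n → F))
    (hmatch : ∀ i : Fin k, KMatching K (Lmul ℓ ⟨0, hk⟩) (Lmul ℓ i)) :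
    (∃ d' : ℕ, ∀ i : Fin k,
      (Finset.univ.filter fun j => ℓ i j ∈ K).card = d') ∧
    ∃ α : Fin k → F, (∀ i, α i ≠ 0) ∧ ∑ i, α i • nucTerm K (ℓ i) = 0 := by
  classical
  set i0 : Fin k := ⟨0, hk⟩ with hi0
  obtain ⟨W, hW⟩ := Submodule.exists_isCompl K
  set π : (Fin n → F) →ₗ[F] (Fin n → F) :=
    W.subtype ∘ₗ (W.projectionOnto K hW.symm) with hπdef
  have hkerπ : ∀ v : Fin n → F, π v = 0 ↔ v ∈ K := by
    intro v
    rw [hπdef]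
    constructor
    · intro h
      have h1 : (W.projectionOnto K hW.symm) v = 0 := by
        exact_mod_cast Subtype.ext (by simpa using h)
      have h2 : v ∈ LinearMap.ker (W.projectionOnto K hW.symm) := h1
      rwa [Submodule.ker_projectionOnto] at h2
    · intro h
      have h2 : v ∈ LinearMap.ker (W.projectionOnto K hW.symm) := by
        rwa [Submodule.ker_projectionOnto]
      simp only [LinearMap.mem_ker] at h2
      simp [LinearMap.comp_apply, h2]
  -- part (a): the degrees agree
  have hmcard : ∀ i' : Fin k, Multiset.card (Multiset.filter (fun v => v ∈ K) (Lmul ℓ i'))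
      = (Finset.univ.filter fun j => ℓ i' j ∈ K).card := by
    intro i'
    rw [Lmul, Multiset.filter_map, Multiset.card_map]
    rfl
  have hcard : ∀ i : Fin k, (Finset.univ.filter fun j => ℓ i j ∈ K).card
      = (Finset.univ.filter fun j => ℓ i0 j ∈ K).card := by
    intro i
    have h1 := rel_card (rel_filter (p := fun v => v ∈ K) (hmatch i)
      (fun a b h => simRel_mem_iff h))
    rw [hmcard i0, hmcard i] at h1
    exact h1.symm
  set d' := (Finset.univ.filter fun j => ℓ i0 j ∈ K).card with hd'
  refine ⟨⟨d', hcard⟩, ?_⟩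
  -- cardinalities of the complements
  have hBcard : ∀ i : Fin k, (Finset.univ.filter fun j => ¬ ℓ i j ∈ K).card = d - d' := by
    intro i
    have h1 := Finset.card_filter_add_card_filter_not
      (s := (Finset.univ : Finset (Fin d))) (fun j => ℓ i j ∈ K)
    rw [hcard i, Finset.card_univ, Fintype.card_fin] at h1
    omega
  -- the substitution homomorphism
  set Ψ : MvPolynomial (Fin n) F →+* Polynomial (MvPolynomial (Fin n) F) :=
    eval₂Hom (Polynomial.C.comp MvPolynomial.C)
      (fun m => Polynomial.C (MvPolynomial.X m)
        + Polynomial.X * Polynomial.C (toForm (π (Pi.single m 1)))) with hΨ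
  have hform : ∀ v : Fin n → F, Ψ (toForm v)
      = Polynomial.C (toForm v) + Polynomial.X * Polynomial.C (toForm (π v)) :=
    fun v => Psi_toForm π v
  have hT : ∀ i : Fin k, Ψ (circTerm (c i) (ℓ i)) =
      Polynomial.C (MvPolynomial.C (c i) * nucTerm K (ℓ i)) *
        ∏ j ∈ Finset.univ.filter (fun j => ¬ ℓ i j ∈ K),
          (Polynomial.C (toForm (ℓ i j)) + Polynomial.X * Polynomial.C (toForm (π (ℓ i j)))) := by
    intro i
    rw [circTerm, map_mul, map_prod]
    simp only [hform]
    rw [hΨ, eval₂Hom_C, RingHom.comp_apply]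
    rw [← Finset.prod_filter_mul_prod_filter_not Finset.univ (fun j => ℓ i j ∈ K)
      (fun j => Polynomial.C (toForm (ℓ i j)) + Polynomial.X * Polynomial.C (toForm (π (ℓ i j))))]
    have h1 : ∏ j ∈ Finset.univ.filter (fun j => ℓ i j ∈ K),
        (Polynomial.C (toForm (ℓ i j)) + Polynomial.X * Polynomial.C (toForm (π (ℓ i j))))
        = Polynomial.C (nucTerm K (ℓ i)) := by
      rw [nucTerm, map_prod]
      refine Finset.prod_congr rfl fun j hj => ?_
      rw [Finset.mem_filter] at hj
      have h2 : π (ℓ i j) = 0 := (hkerπ _).2 hj.2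
      simp [h2, toForm_eq_zero_iff.2 rfl]
    rw [h1, map_mul]
    ring
  -- extract the coefficient of X^(d-d')
  have h0 : (0 : Polynomial (MvPolynomial (Fin n) F)) = ∑ i, Ψ (circTerm (c i) (ℓ i)) := by
    rw [← map_sum, hzero, map_zero]
  have h0c := congrArg (fun p => Polynomial.coeff p (d - d')) h0
  simp only [Polynomial.coeff_zero, Polynomial.finset_sum_coeff] at h0c
  have hcoeff : ∀ i : Fin k, (Ψ (circTerm (c i) (ℓ i))).coeff (d - d') =
      (MvPolynomial.C (c i) * nucTerm K (ℓ i)) *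
        ∏ j ∈ Finset.univ.filter (fun j => ¬ ℓ i j ∈ K), toForm (π (ℓ i j)) := by
    intro i
    rw [hT i, Polynomial.coeff_C_mul, ← hBcard i,
      (coeff_prod_linear _ (fun j => toForm (ℓ i j)) (fun j => toForm (π (ℓ i j)))).2]
  simp only [hcoeff] at h0c
  -- relate the non-nucleus products via the matching
  have htrans : ∀ i' : Fin k,
      (((Lmul ℓ i').filter (fun v => ¬ v ∈ K)).map (fun v => toForm (π v))).prod
      = ∏ j ∈ Finset.univ.filter (fun j => ¬ ℓ i' j ∈ K), toForm (π (ℓ i' j)) := by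
    intro i'
    rw [Lmul, Multiset.filter_map, Multiset.map_map, Finset.prod_eq_multiset_prod,
      Finset.filter_val]
    rfl
  have hP : ∀ i : Fin k, ∃ γ : F, γ ≠ 0 ∧
      (∏ j ∈ Finset.univ.filter (fun j => ¬ ℓ i j ∈ K), toForm (π (ℓ i j)))
      = MvPolynomial.C γ *
        ∏ j ∈ Finset.univ.filter (fun j => ¬ ℓ i0 j ∈ K), toForm (π (ℓ i0 j)) := by
    intro i
    have h1 := rel_filter (p := fun v => ¬ v ∈ K) (hmatch i)
      (fun a b h => not_congr (simRel_mem_iff h))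
    obtain ⟨γ, hγ, hp⟩ := rel_prod π (fun v hv => (hkerπ v).2 hv) h1
    rw [htrans i0, htrans i] at hp
    exact ⟨γ, hγ, hp⟩
  choose γ hγ hpr using hP
  set P := ∏ j ∈ Finset.univ.filter (fun j => ¬ ℓ i0 j ∈ K), toForm (π (ℓ i0 j)) with hPdef
  have hPne : P ≠ 0 := by
    rw [hPdef]
    refine Finset.prod_ne_zero_iff.2 fun j hj hzero' => ?_
    rw [Finset.mem_filter] at hj
    exact hj.2 ((hkerπ _).1 (toForm_eq_zero_iff.1 hzero'))
  refine ⟨fun i => c i * γ i, fun i => mul_ne_zero (hc i) (hγ i), ?_⟩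
  have hfin : (∑ i, MvPolynomial.C (c i * γ i) * nucTerm K (ℓ i)) * P = 0 := by
    rw [Finset.sum_mul]
    calc ∑ i, MvPolynomial.C (c i * γ i) * nucTerm K (ℓ i) * P
        = ∑ i, (MvPolynomial.C (c i) * nucTerm K (ℓ i)) * (MvPolynomial.C (γ i) * P) := by
          refine Finset.sum_congr rfl fun i _ => ?_
          rw [map_mul]; ring
      _ = ∑ i, (MvPolynomial.C (c i) * nucTerm K (ℓ i)) *
            ∏ j ∈ Finset.univ.filter (fun j => ¬ ℓ i j ∈ K), toForm (π (ℓ i j)) :=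
          Finset.sum_congr rfl fun i _ => by rw [← hpr i]
      _ = 0 := h0c.symm
  have h2 := (mul_eq_zero.1 hfin).resolve_right hPne
  simpa [smul_eq_C_mul] using h2


end SGPaper
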